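/- A solution φ with all agents investing positively implements the efficient profile x* (i.e., the first-order conditions ∂C_i(x*)/∂x_i = 0 hold for all i, matching the efficiency first-order conditions ∂ℂ(x*)/∂x_i = 0) if and only if for each agent i the direct liability is φ(i,i) = ℓ_i + ∑_{k > i} (∏_{i < j ≤ k} p_j(x*_j))·ℓ_k. -/

import Mathlib

open Finset

/-- Agent i's expected cost at profile x under solution φ. -/
noncomputable def expCost (n : ℕ) (p : Fin n → ℝ → ℝ) (φ : Fin n → Fin n → ℝ)
    (i : Fin n) (x : Fin n → ℝ) : ℝ :=
  (∑ j ∈ univ.filter (fun j => j < i),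
    (∏ h ∈ univ.filter (fun h => h < j), p h (x h)) * (1 - p j (x j)) * φ j i)
  + (∏ h ∈ univ.filter (fun h => h < i), p h (x h)) * (1 - p i (x i)) * φ i i
  + x i

/-- Theorem 1: A solution φ implements the efficient profile x*
(all agents' first-order conditions hold at x*) if and only if
φ(i,i) = ℓ_i + ∑_{k>i} (∏_{i<j≤k} p_j(x*_j))·ℓ_k for each agent i. -/
theorem stmt_10 (n : ℕ) (ℓ : Fin n → ℝ) (p : Fin n → ℝ → ℝ) (φ : Fin n → Fin n → ℝ)
    (hℓ : ∀ j, 0 < ℓ j)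
    (hp_mono : ∀ i, StrictMonoOn (p i) (Set.Ici 0))
    (hp_concave : ∀ i, StrictConcaveOn ℝ (Set.Ici 0) (p i))
    (hp_diff : ∀ i, Differentiable ℝ (p i))
    (hp_pos : ∀ i x, 0 < x → 0 < p i x)
    (xstar : Fin n → ℝ) (hx_pos : ∀ i, 0 < xstar i)
    (hFOC : ∀ i : Fin n,
      (deriv (p i) (xstar i) / p i (xstar i)) *
        ∑ k ∈ univ.filter (fun k => i ≤ k),
          (∏ j ∈ univ.filter (fun j => j ≤ k), p j (xstar j)) * ℓ k = 1) :
    (∀ i : Fin n,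
      deriv (fun t => expCost n p φ i (Function.update xstar i t)) (xstar i) = 0) ↔
    (∀ i : Fin n, φ i i = ℓ i +
      ∑ k ∈ univ.filter (fun k => i < k),
        (∏ j ∈ univ.filter (fun j => i < j ∧ j ≤ k), p j (xstar j)) * ℓ k) := by
  have key : ∀ i : Fin n,
      (deriv (fun t => expCost n p φ i (Function.update xstar i t)) (xstar i) = 0 ↔
       φ i i = ℓ i + ∑ k ∈ univ.filter (fun k => i < k),
         (∏ j ∈ univ.filter (fun j => i < j ∧ j ≤ k), p j (xstar j)) * ℓ k) := by
    intro i
    set P : ℝ := ∏ h ∈ univ.filter (fun h => h < i), p h (xstar h) with hP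
    set D : ℝ := deriv (p i) (xstar i) with hD
    set T : ℝ := ℓ i + ∑ k ∈ univ.filter (fun k => i < k),
         (∏ j ∈ univ.filter (fun j => i < j ∧ j ≤ k), p j (xstar j)) * ℓ k with hT
    have hPpos : 0 < P := by
      apply Finset.prod_pos
      intro h _
      exact hp_pos h (xstar h) (hx_pos h)
    have hpipos : 0 < p i (xstar i) := hp_pos i (xstar i) (hx_pos i)
    have hDpos : 0 < D := by
      have h1 : slope (p i) (xstar i) (xstar i + 1) ≤ D :=
        (hp_concave i).concaveOn.slope_le_deriv (le_of_lt (hx_pos i))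
          (by simp [Set.mem_Ici]; linarith [hx_pos i]) (by linarith)
          ((hp_diff i).differentiableAt)
      have h2 : 0 < slope (p i) (xstar i) (xstar i + 1) := by
        rw [slope_def_field]
        have := hp_mono i (Set.mem_Ici.2 (le_of_lt (hx_pos i)))
          (Set.mem_Ici.2 (by linarith [hx_pos i] : (0:ℝ) ≤ xstar i + 1)) (by linarith)
        have hden : (0:ℝ) < xstar i + 1 - xstar i := by ring_nf; norm_num
        exact div_pos (by linarith) hden
      linarith
    -- the derivative of agent i's cost
    have hderiv : deriv (fun t => expCost n p φ i (Function.update xstar i t)) (xstar i)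
        = P * -D * φ i i + 1 := by
      have hfun : (fun t => expCost n p φ i (Function.update xstar i t)) =
          (fun t => ((∑ j ∈ univ.filter (fun j => j < i),
            (∏ h ∈ univ.filter (fun h => h < j), p h (xstar h)) * (1 - p j (xstar j)) * φ j i)
            + P * (1 - p i t) * φ i i) + t) := by
        funext t
        simp only [expCost]
        congr 1
        · congr 1
          · apply Finset.sum_congr rfl
            intro j hj
            simp only [mem_filter] at hj
            rw [Function.update_of_ne (ne_of_lt hj.2)]
            congr 1
            congr 1
            apply Finset.prod_congr rfl
            intro h hh
            simp only [mem_filter] at hh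
            rw [Function.update_of_ne (ne_of_lt (lt_trans hh.2 hj.2))]
          · rw [Function.update_self]
            congr 1
            congr 1
            rw [hP]
            apply Finset.prod_congr rfl
            intro h hh
            simp only [mem_filter] at hh
            rw [Function.update_of_ne (ne_of_lt hh.2)]
        · rw [Function.update_self]
      rw [hfun]
      have hpi : HasDerivAt (p i) D (xstar i) := ((hp_diff i) (xstar i)).hasDerivAt
      have h1 : HasDerivAt (fun t : ℝ => (1 : ℝ) - p i t) (-D) (xstar i) := by
        exact hpi.const_sub 1
      have h2 : HasDerivAt (fun t : ℝ => P * (1 - p i t) * φ i i)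
          (P * -D * φ i i) (xstar i) := (h1.const_mul P).mul_const (φ i i)
      have h3 := (((hasDerivAt_const (xstar i)
          ((∑ j ∈ univ.filter (fun j => j < i),
            (∏ h ∈ univ.filter (fun h => h < j), p h (xstar h)) * (1 - p j (xstar j)) * φ j i)
            : ℝ)).add h2).add (hasDerivAt_id (xstar i)))
      exact h3.deriv.trans (by ring)
    -- FOC rearrangement: D * P * T = 1
    have hsum : (∑ k ∈ univ.filter (fun k => i ≤ k),
          (∏ j ∈ univ.filter (fun j => j ≤ k), p j (xstar j)) * ℓ k)
        = P * p i (xstar i) * T := by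
      have hPPi : (∏ j ∈ univ.filter (fun j => j ≤ i), p j (xstar j)) = P * p i (xstar i) := by
        have hset : univ.filter (fun j : Fin n => j ≤ i)
            = insert i (univ.filter (fun j => j < i)) := by
          ext j
          simp only [Finset.mem_insert, mem_filter, mem_univ, true_and]
          constructor
          · intro h
            rcases eq_or_lt_of_le h with h | h
            · exact Or.inl h
            · exact Or.inr h
          · rintro (rfl | h)
            · exact le_refl _
            · exact le_of_lt h
        rw [hset, Finset.prod_insert (by simp), hP, mul_comm]
      have hfil : univ.filter (fun k : Fin n => i ≤ k)
          = insert i (univ.filter (fun k => i < k)) := by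
        ext k
        simp only [Finset.mem_insert, mem_filter, mem_univ, true_and]
        constructor
        · intro h
          rcases eq_or_lt_of_le h with h | h
          · exact Or.inl h.symm
          · exact Or.inr h
        · rintro (rfl | h)
          · exact le_refl _
          · exact le_of_lt h
      rw [hfil, Finset.sum_insert (by simp)]
      have hterm : ∀ k ∈ univ.filter (fun k : Fin n => i < k),
          (∏ j ∈ univ.filter (fun j => j ≤ k), p j (xstar j)) * ℓ k
          = P * p i (xstar i) * ((∏ j ∈ univ.filter (fun j => i < j ∧ j ≤ k), p j (xstar j)) * ℓ k) := by
        intro k hk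
        simp only [mem_filter] at hk
        have hset : univ.filter (fun j : Fin n => j ≤ k)
            = (univ.filter (fun j => j ≤ i)) ∪ (univ.filter (fun j => i < j ∧ j ≤ k)) := by
          ext j
          simp only [mem_union, mem_filter, mem_univ, true_and]
          constructor
          · intro h
            rcases le_or_gt j i with h' | h'
            · exact Or.inl h'
            · exact Or.inr ⟨h', h⟩
          · rintro (h | h)
            · exact le_trans h (le_of_lt hk.2)
            · exact h.2
        have hdisj : Disjoint (univ.filter (fun j : Fin n => j ≤ i))
            (univ.filter (fun j => i < j ∧ j ≤ k)) := by
          rw [Finset.disjoint_left]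
          intro j hj hj'
          simp only [mem_filter] at hj hj'
          exact absurd hj.2 (not_le_of_gt hj'.2.1)
        rw [hset, Finset.prod_union hdisj, hPPi]
        ring
      rw [Finset.sum_congr rfl hterm, ← Finset.mul_sum, hPPi, hT]
      ring
    have hDPT : D * P * T = 1 := by
      have := hFOC i
      rw [hsum] at this
      have hpine : p i (xstar i) ≠ 0 := ne_of_gt hpipos
      field_simp at this
      nlinarith [this]
    rw [hderiv]
    constructor
    · intro h
      have h' : D * P * φ i i = 1 := by nlinarith
      have : D * P * φ i i = D * P * T := by rw [h', hDPT]
      exact mul_left_cancel₀ (ne_of_gt (mul_pos hDpos hPpos)) this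
    · intro h
      rw [h]
      nlinarith [hDPT]
  constructor
  · intro h i; exact (key i).1 (h i)
  · intro h i; exact (key i).2 (h i)
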